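/- Let Θ* be symmetric positive definite with λ_min(Θ*) > 0 and let Δ be symmetric with ‖Δ‖_op ≤ λ_min(Θ*)/2. Then for all v ∈ [0,1], λ_min(∫₀¹ (1-v)(Θ*+vΔ)^{-1} ⊗ (Θ*+vΔ)^{-1} dv) ≥ (1/2) · min_{0≤v≤1} λ_min²((Θ*+vΔ)^{-1}) ≥ (1/2)(λ_max(Θ*) + ‖Δ‖_op)^{-2}. -/

import Mathlib

open scoped Kronecker
open Matrix
set_option linter.unusedSectionVars false

namespace Aux

variable {n m : Type*} [Fintype n] [DecidableEq n] [Fintype m] [DecidableEq m]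

lemma norm_sq_eq_dot (x : EuclideanSpace ℝ n) : (⇑x) ⬝ᵥ (⇑x) = ‖x‖ ^ 2 := by
  rw [← real_inner_self_eq_norm_sq, EuclideanSpace.inner_eq_star_dotProduct]
  simp [star_trivial]

lemma abs_dot_mulVec_le (M : Matrix n n ℝ) (x : n → ℝ) :
    |x ⬝ᵥ (M *ᵥ x)| ≤ ‖Matrix.toEuclideanCLM (𝕜 := ℝ) M‖ * (x ⬝ᵥ x) := by
  set y : EuclideanSpace ℝ n := (WithLp.equiv 2 _).symm x with hy
  have h1 : x ⬝ᵥ (M *ᵥ x) = inner ℝ y (Matrix.toEuclideanCLM (𝕜 := ℝ) M y) := by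
    rw [hy]
    simp [Matrix.toEuclideanCLM_toLp, EuclideanSpace.inner_toLp_toLp, dotProduct_comm]
  have h2 : x ⬝ᵥ x = ‖y‖ ^ 2 := by
    rw [hy]
    exact norm_sq_eq_dot _
  rw [h1, h2]
  calc |inner ℝ y (Matrix.toEuclideanCLM (𝕜 := ℝ) M y)|
      ≤ ‖y‖ * ‖Matrix.toEuclideanCLM (𝕜 := ℝ) M y‖ := abs_real_inner_le_norm _ _
    _ ≤ ‖y‖ * (‖Matrix.toEuclideanCLM (𝕜 := ℝ) M‖ * ‖y‖) := by
        gcongr; exact (Matrix.toEuclideanCLM (𝕜 := ℝ) M).le_opNorm y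
    _ = ‖Matrix.toEuclideanCLM (𝕜 := ℝ) M‖ * ‖y‖ ^ 2 := by ring

lemma spectral_real {M : Matrix n n ℝ} (hM : M.IsHermitian) :
    M = (hM.eigenvectorUnitary : Matrix n n ℝ) * diagonal hM.eigenvalues *
      star (hM.eigenvectorUnitary : Matrix n n ℝ) := by
  have := hM.spectral_theorem
  simpa using this

lemma unit_mul_star {M : Matrix n n ℝ} (hM : M.IsHermitian) :
    (hM.eigenvectorUnitary : Matrix n n ℝ) * star (hM.eigenvectorUnitary : Matrix n n ℝ) = 1 :=
  (Matrix.mem_unitaryGroup_iff).mp hM.eigenvectorUnitary.2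

lemma star_mul_unit {M : Matrix n n ℝ} (hM : M.IsHermitian) :
    star (hM.eigenvectorUnitary : Matrix n n ℝ) * (hM.eigenvectorUnitary : Matrix n n ℝ) = 1 :=
  (Matrix.mem_unitaryGroup_iff').mp hM.eigenvectorUnitary.2

lemma conj_shift (U : Matrix n n ℝ) (hU : U * star U = 1) (d : n → ℝ) (c : ℝ) :
    U * diagonal d * star U - c • 1 = U * diagonal (fun i => d i - c) * star U := by
  have h1 : diagonal (fun i => d i - c) = diagonal d - c • (1 : Matrix n n ℝ) := by
    rw [Matrix.smul_one_eq_diagonal, ← Matrix.diagonal_sub]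
  rw [h1, Matrix.mul_sub, Matrix.sub_mul]
  congr 1
  rw [Matrix.mul_smul, Matrix.mul_one, Matrix.smul_mul, hU]

lemma conj_diag_psd (U : Matrix n n ℝ) (d : n → ℝ) (hd : ∀ i, 0 ≤ d i) :
    (U * diagonal d * star U).PosSemidef := by
  have := (Matrix.PosSemidef.diagonal (d := d) hd).mul_mul_conjTranspose_same U
  rwa [← Matrix.star_eq_conjTranspose] at this

lemma psd_sub_smul {M : Matrix n n ℝ} (hM : M.IsHermitian) {c : ℝ}
    (h : ∀ i, c ≤ hM.eigenvalues i) : (M - c • 1).PosSemidef := by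
  have key : M - c • 1 = (hM.eigenvectorUnitary : Matrix n n ℝ) *
      diagonal (fun i => hM.eigenvalues i - c) * star (hM.eigenvectorUnitary : Matrix n n ℝ) := by
    conv_lhs => rw [spectral_real hM]
    exact conj_shift _ (unit_mul_star hM) _ c
  rw [key]
  exact conj_diag_psd _ _ fun i => sub_nonneg.mpr (h i)

lemma psd_smul_sub {M : Matrix n n ℝ} (hM : M.IsHermitian) {c : ℝ}
    (h : ∀ i, hM.eigenvalues i ≤ c) : (c • 1 - M).PosSemidef := by
  have key : c • (1 : Matrix n n ℝ) - M = (hM.eigenvectorUnitary : Matrix n n ℝ) *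
      diagonal (fun i => c - hM.eigenvalues i) * star (hM.eigenvectorUnitary : Matrix n n ℝ) := by
    have := conj_shift (hM.eigenvectorUnitary : Matrix n n ℝ) (unit_mul_star hM)
      (fun i => -hM.eigenvalues i) (-c)
    have h2 : (hM.eigenvectorUnitary : Matrix n n ℝ) * diagonal (fun i => -hM.eigenvalues i) *
        star (hM.eigenvectorUnitary : Matrix n n ℝ) = -M := by
      conv_rhs => rw [spectral_real hM]
      rw [← Matrix.diagonal_neg, Matrix.mul_neg, Matrix.neg_mul]
    rw [h2] at this
    have h3 : (fun i => -hM.eigenvalues i - -c) = (fun i => c - hM.eigenvalues i) := by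
      funext i; ring
    rw [h3] at this
    rw [← this, neg_smul]
    abel
  rw [key]
  exact conj_diag_psd _ _ fun i => sub_nonneg.mpr (h i)




variable {n m : Type*} [Fintype n] [DecidableEq n] [Fintype m] [DecidableEq m]

lemma dot_unit {M : Matrix n n ℝ} (hM : M.IsHermitian) (i : n) :
    ⇑(hM.eigenvectorBasis i) ⬝ᵥ ⇑(hM.eigenvectorBasis i) = 1 := by
  rw [norm_sq_eq_dot, hM.eigenvectorBasis.orthonormal.1 i, one_pow]

lemma le_eigenvalues {M : Matrix n n ℝ} (hM : M.IsHermitian) {c : ℝ}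
    (h : (M - c • 1).PosSemidef) (i : n) : c ≤ hM.eigenvalues i := by
  have hx := hM.mulVec_eigenvectorBasis i
  set x : n → ℝ := ⇑(hM.eigenvectorBasis i) with hxdef
  have hxx : x ⬝ᵥ x = 1 := dot_unit hM i
  have h2 := h.dotProduct_mulVec_nonneg x
  rw [Matrix.sub_mulVec, Matrix.smul_mulVec, Matrix.one_mulVec, hx,
    star_trivial, dotProduct_sub, dotProduct_smul, dotProduct_smul, hxx] at h2
  simp only [smul_eq_mul, mul_one] at h2
  linarith

lemma eigenvalues_le {M : Matrix n n ℝ} (hM : M.IsHermitian) {c : ℝ}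
    (h : (c • 1 - M).PosSemidef) (i : n) : hM.eigenvalues i ≤ c := by
  have hx := hM.mulVec_eigenvectorBasis i
  set x : n → ℝ := ⇑(hM.eigenvectorBasis i) with hxdef
  have hxx : x ⬝ᵥ x = 1 := dot_unit hM i
  have h2 := h.dotProduct_mulVec_nonneg x
  rw [Matrix.sub_mulVec, Matrix.smul_mulVec, Matrix.one_mulVec, hx,
    star_trivial, dotProduct_sub, dotProduct_smul, dotProduct_smul, hxx] at h2
  simp only [smul_eq_mul, mul_one] at h2
  linarith

lemma inv_spectral {S : Matrix n n ℝ} (hS : S.PosDef) :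
    S⁻¹ = (hS.1.eigenvectorUnitary : Matrix n n ℝ) *
      diagonal (fun i => (hS.1.eigenvalues i)⁻¹) * star (hS.1.eigenvectorUnitary : Matrix n n ℝ) := by
  apply Matrix.inv_eq_right_inv
  set U : Matrix n n ℝ := (hS.1.eigenvectorUnitary : Matrix n n ℝ) with hU
  set ev : n → ℝ := hS.1.eigenvalues with hev
  have hrw : S = U * diagonal ev * star U := spectral_real hS.1
  have hsU : star U * U = 1 := star_mul_unit hS.1
  have huU : U * star U = 1 := unit_mul_star hS.1
  have key : diagonal ev * diagonal (fun i => (ev i)⁻¹) = (1 : Matrix n n ℝ) := by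
    rw [Matrix.diagonal_mul_diagonal]
    have h1 : (fun i => ev i * (ev i)⁻¹) = fun _ => (1 : ℝ) := by
      funext i; exact mul_inv_cancel₀ (ne_of_gt (hS.eigenvalues_pos i))
    rw [h1, Matrix.diagonal_one]
  rw [hrw]
  calc (U * diagonal ev * star U) * (U * diagonal (fun i => (ev i)⁻¹) * star U)
      = U * (diagonal ev * ((star U * U) * (diagonal (fun i => (ev i)⁻¹) * star U))) := by
        simp only [Matrix.mul_assoc]
    _ = 1 := by
        rw [hsU, Matrix.one_mul, ← Matrix.mul_assoc (diagonal ev), key, Matrix.one_mul, huU]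

lemma psd_kron {A : Matrix n n ℝ} {B : Matrix m m ℝ} (hA : A.PosSemidef) (hB : B.PosSemidef) :
    (A ⊗ₖ B).PosSemidef := by
  exact hA.kronecker hB


lemma dot_self_nonneg (x : n → ℝ) : 0 ≤ x ⬝ᵥ x :=
  Finset.sum_nonneg fun i _ => mul_self_nonneg _

lemma herm_smul_one (c : ℝ) : ((c • 1 : Matrix n n ℝ)).IsHermitian := by
  rw [Matrix.smul_one_eq_diagonal]
  exact Matrix.isHermitian_diagonal _

lemma quad_of_psd {M : Matrix n n ℝ} {c : ℝ} (h : (M - c • 1).PosSemidef) (x : n → ℝ) :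
    c * (x ⬝ᵥ x) ≤ x ⬝ᵥ (M *ᵥ x) := by
  have h2 := h.dotProduct_mulVec_nonneg x
  rw [star_trivial, Matrix.sub_mulVec, Matrix.smul_mulVec, Matrix.one_mulVec,
    dotProduct_sub, dotProduct_smul, smul_eq_mul] at h2
  linarith

lemma quad_of_psd' {M : Matrix n n ℝ} {c : ℝ} (h : (c • 1 - M).PosSemidef) (x : n → ℝ) :
    x ⬝ᵥ (M *ᵥ x) ≤ c * (x ⬝ᵥ x) := by
  have h2 := h.dotProduct_mulVec_nonneg x
  rw [star_trivial, Matrix.sub_mulVec, Matrix.smul_mulVec, Matrix.one_mulVec,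
    dotProduct_sub, dotProduct_smul, smul_eq_mul] at h2
  linarith

lemma psd_of_quad {M : Matrix n n ℝ} (hM : M.IsHermitian) {c : ℝ}
    (h : ∀ x : n → ℝ, c * (x ⬝ᵥ x) ≤ x ⬝ᵥ (M *ᵥ x)) : (M - c • 1).PosSemidef := by
  refine .of_dotProduct_mulVec_nonneg (hM.sub (herm_smul_one c)) fun x => ?_
  rw [star_trivial, Matrix.sub_mulVec, Matrix.smul_mulVec, Matrix.one_mulVec,
    dotProduct_sub, dotProduct_smul, smul_eq_mul]
  linarith [h x]

lemma psd_of_quad' {M : Matrix n n ℝ} (hM : M.IsHermitian) {c : ℝ}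
    (h : ∀ x : n → ℝ, x ⬝ᵥ (M *ᵥ x) ≤ c * (x ⬝ᵥ x)) : (c • 1 - M).PosSemidef := by
  refine .of_dotProduct_mulVec_nonneg ((herm_smul_one c).sub hM) fun x => ?_
  rw [star_trivial, Matrix.sub_mulVec, Matrix.smul_mulVec, Matrix.one_mulVec,
    dotProduct_sub, dotProduct_smul, smul_eq_mul]
  linarith [h x]

lemma pos_iInf {f : n → ℝ} [Nonempty n] (h : ∀ i, 0 < f i) : 0 < ⨅ i, f i := by
  obtain ⟨i0, hi0⟩ := Finite.exists_min f
  exact lt_of_lt_of_le (h i0) (le_ciInf hi0)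

lemma sub_kron (A B : Matrix n n ℝ) (C : Matrix m m ℝ) :
    (A - B) ⊗ₖ C = A ⊗ₖ C - B ⊗ₖ C := by
  ext ⟨a, c⟩ ⟨b, d⟩
  simp [Matrix.kroneckerMap_apply, sub_mul]

lemma kron_sub (A : Matrix n n ℝ) (B C : Matrix m m ℝ) :
    A ⊗ₖ (B - C) = A ⊗ₖ B - A ⊗ₖ C := by
  ext ⟨a, c⟩ ⟨b, d⟩
  simp [Matrix.kroneckerMap_apply, mul_sub]


lemma dot_mulVec_expand (M : Matrix n n ℝ) (x : n → ℝ) :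
    x ⬝ᵥ (M *ᵥ x) = ∑ a, ∑ b, x a * (M a b * x b) := by
  simp [dotProduct, Matrix.mulVec, Finset.mul_sum]

lemma intervalIntegrable_finsum {ι : Type*} (s : Finset ι) (f : ι → ℝ → ℝ) {a b : ℝ}
    (h : ∀ i ∈ s, IntervalIntegrable (f i) MeasureTheory.volume a b) :
    IntervalIntegrable (fun w => ∑ i ∈ s, f i w) MeasureTheory.volume a b := by
  have h2 : (fun w => ∑ i ∈ s, f i w) = ∑ i ∈ s, f i := by
    funext w; rw [Finset.sum_apply]
  rw [h2]
  exact IntervalIntegrable.sum s h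

end Aux

open scoped Kronecker

/-- The spectral (L2 operator) norm of a real square matrix. -/
noncomputable def opNorm {p : ℕ} (M : Matrix (Fin p) (Fin p) ℝ) : ℝ :=
  ‖Matrix.toEuclideanCLM (𝕜 := ℝ) M‖

set_option maxHeartbeats 1600000 in
/-- Lower bound on the smallest eigenvalue of the integral
`K = ∫₀¹ (1-v)(Θ*+vΔ)⁻¹ ⊗ (Θ*+vΔ)⁻¹ dv` (formed entrywise):
`λ_min(K) ≥ (1/2) min_{v∈[0,1]} λ_min²((Θ*+vΔ)⁻¹) ≥ (1/2)(λ_max(Θ*) + ‖Δ‖_op)⁻²`. -/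
theorem stmt15 {p : ℕ} (Θ Δ : Matrix (Fin p) (Fin p) ℝ) (hΘ : Θ.PosDef) (hΔ : Δ.IsSymm)
    (hsmall : opNorm Δ ≤ (⨅ i, hΘ.isHermitian.eigenvalues i) / 2)
    (hinv : ∀ v : ℝ, ((Θ + v • Δ)⁻¹).IsHermitian)
    (hK : (Matrix.of fun a b : Fin p × Fin p =>
        ∫ v in (0 : ℝ)..1, (1 - v) * ((Θ + v • Δ)⁻¹ ⊗ₖ (Θ + v • Δ)⁻¹) a b).IsHermitian) :
    (1 / 2) * (((⨆ i, hΘ.isHermitian.eigenvalues i) + opNorm Δ) ^ 2)⁻¹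
        ≤ (1 / 2) * ⨅ v : Set.Icc (0 : ℝ) 1, (⨅ i, (hinv ↑v).eigenvalues i) ^ 2 ∧
      (1 / 2) * (⨅ v : Set.Icc (0 : ℝ) 1, (⨅ i, (hinv ↑v).eigenvalues i) ^ 2)
        ≤ ⨅ i, hK.eigenvalues i := by
  classical
  rcases Nat.eq_zero_or_pos p with hp | hp
  · -- degenerate case p = 0
    subst hp
    have hde : opNorm Δ = 0 := le_antisymm (by simpa [Real.iInf_of_isEmpty] using hsmall)
      (norm_nonneg _)
    constructor
    · rw [hde, Real.iSup_of_isEmpty]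
      norm_num
    · have h1 : (⨅ v : Set.Icc (0:ℝ) 1, (⨅ i, (hinv ↑v).eigenvalues i) ^ 2) = 0 := by
        simp [Real.iInf_of_isEmpty]
      rw [h1, Real.iInf_of_isEmpty]
      norm_num
  · haveI : Nonempty (Fin p) := Fin.pos_iff_nonempty.mp hp
    have hΔherm : Δ.IsHermitian := by
      rwa [Matrix.IsHermitian, Matrix.conjTranspose_eq_transpose_of_trivial]
    set lam : ℝ := ⨅ i, hΘ.isHermitian.eigenvalues i with hlamdef
    set Lam : ℝ := ⨆ i, hΘ.isHermitian.eigenvalues i with hLamdef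
    set d : ℝ := opNorm Δ with hddef
    have hbddB : BddBelow (Set.range hΘ.isHermitian.eigenvalues) :=
      (Set.finite_range _).bddBelow
    have hbddA : BddAbove (Set.range hΘ.isHermitian.eigenvalues) :=
      (Set.finite_range _).bddAbove
    have hlam_pos : 0 < lam := Aux.pos_iInf fun i => hΘ.eigenvalues_pos i
    have hd0 : 0 ≤ d := norm_nonneg _
    have hdlam : d ≤ lam / 2 := hsmall
    have hlamLam : lam ≤ Lam :=
      le_trans (ciInf_le hbddB (Classical.arbitrary _)) (le_ciSup hbddA _)
    have hc₀ : 0 < Lam + d := by linarith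
    have hΘlow : ∀ x : Fin p → ℝ, lam * (x ⬝ᵥ x) ≤ x ⬝ᵥ (Θ *ᵥ x) :=
      Aux.quad_of_psd (Aux.psd_sub_smul hΘ.isHermitian fun i => ciInf_le hbddB i)
    have hΘhigh : ∀ x : Fin p → ℝ, x ⬝ᵥ (Θ *ᵥ x) ≤ Lam * (x ⬝ᵥ x) :=
      Aux.quad_of_psd' (Aux.psd_smul_sub hΘ.isHermitian fun i => le_ciSup hbddA i)
    have hΔabs : ∀ x : Fin p → ℝ, |x ⬝ᵥ (Δ *ᵥ x)| ≤ d * (x ⬝ᵥ x) :=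
      Aux.abs_dot_mulVec_le Δ
    -- key facts for each v ∈ [0,1]
    have key : ∀ v : ℝ, v ∈ Set.Icc (0:ℝ) 1 →
        (Θ + v • Δ).PosDef ∧ (∀ i, (Lam + d)⁻¹ ≤ (hinv v).eigenvalues i) := by
      intro v hv
      obtain ⟨hv0, hv1⟩ := hv
      have hSherm : (Θ + v • Δ).IsHermitian := by
        refine hΘ.isHermitian.add ?_
        rw [Matrix.IsHermitian, Matrix.conjTranspose_smul, hΔherm.eq, star_trivial]
      have hSlow : ∀ x : Fin p → ℝ, (lam / 2) * (x ⬝ᵥ x) ≤ x ⬝ᵥ ((Θ + v • Δ) *ᵥ x) := by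
        intro x
        have h1 := hΘlow x
        have h2 := abs_le.mp (hΔabs x)
        have hxx := Aux.dot_self_nonneg x
        rw [Matrix.add_mulVec, dotProduct_add, Matrix.smul_mulVec,
          dotProduct_smul, smul_eq_mul]
        nlinarith [mul_le_mul_of_nonneg_left h2.1 hv0,
          mul_nonneg (mul_nonneg hv0 hd0) hxx,
          mul_le_mul_of_nonneg_right hdlam hxx,
          mul_nonneg (sub_nonneg.2 hv1) (mul_nonneg hd0 hxx)]
      have hShigh : ∀ x : Fin p → ℝ, x ⬝ᵥ ((Θ + v • Δ) *ᵥ x) ≤ (Lam + d) * (x ⬝ᵥ x) := by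
        intro x
        have h1 := hΘhigh x
        have h2 := abs_le.mp (hΔabs x)
        have hxx := Aux.dot_self_nonneg x
        rw [Matrix.add_mulVec, dotProduct_add, Matrix.smul_mulVec,
          dotProduct_smul, smul_eq_mul]
        nlinarith [mul_le_mul_of_nonneg_left h2.2 hv0,
          mul_nonneg (sub_nonneg.2 hv1) (mul_nonneg hd0 hxx)]
      have hSpd : (Θ + v • Δ).PosDef := by
        refine Matrix.PosDef.of_dotProduct_mulVec_pos hSherm fun x hx => ?_
        rw [star_trivial]
        have hxx : 0 < x ⬝ᵥ x :=
          lt_of_le_of_ne (Aux.dot_self_nonneg x) (Ne.symm fun h0 => hx (dotProduct_self_eq_zero.mp h0))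
        exact lt_of_lt_of_le (mul_pos (by linarith) hxx) (hSlow x)
      have heig_le : ∀ i, hSpd.1.eigenvalues i ≤ Lam + d :=
        Aux.eigenvalues_le hSpd.1 (Aux.psd_of_quad' hSpd.1 hShigh)
      have hinvpsd : ((Θ + v • Δ)⁻¹ - (Lam + d)⁻¹ • 1).PosSemidef := by
        rw [Aux.inv_spectral hSpd, Aux.conj_shift _ (Aux.unit_mul_star hSpd.1)]
        refine Aux.conj_diag_psd _ _ fun i => sub_nonneg.2 ?_
        exact inv_anti₀ (hSpd.eigenvalues_pos i) (heig_le i)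
      exact ⟨hSpd, fun i => Aux.le_eigenvalues (hinv v) hinvpsd i⟩
    have hmono : ∀ v : Set.Icc (0:ℝ) 1,
        (((Lam + d) ^ 2)⁻¹ : ℝ) ≤ (⨅ i, (hinv ↑v).eigenvalues i) ^ 2 := by
      intro v
      have h2 : (Lam + d)⁻¹ ≤ ⨅ i, (hinv ↑v).eigenvalues i := le_ciInf ((key v v.2).2)
      have h3 : (0:ℝ) ≤ (Lam + d)⁻¹ := inv_nonneg.2 hc₀.le
      calc (((Lam + d) ^ 2)⁻¹ : ℝ) = ((Lam + d)⁻¹) ^ 2 := by rw [inv_pow]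
        _ ≤ _ := pow_le_pow_left₀ h3 h2 2
    refine ⟨mul_le_mul_of_nonneg_left (le_ciInf hmono) (by norm_num), ?_⟩
    -- Part 2
    set m₂ : ℝ := ⨅ v : Set.Icc (0:ℝ) 1, (⨅ i, (hinv ↑v).eigenvalues i) ^ 2 with hm₂def
    have hm₂bdd : BddBelow (Set.range fun v : Set.Icc (0:ℝ) 1 =>
        (⨅ i, (hinv ↑v).eigenvalues i) ^ 2) := ⟨0, fun y ⟨v, hv⟩ => hv ▸ sq_nonneg _⟩
    have hbddinv : ∀ v : ℝ, BddBelow (Set.range (hinv v).eigenvalues) :=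
      fun v => (Set.finite_range _).bddBelow
    have pb : ∀ x : Fin p × Fin p → ℝ, ∀ w ∈ Set.Icc (0:ℝ) 1,
        m₂ * (x ⬝ᵥ x) ≤ x ⬝ᵥ (((Θ + w • Δ)⁻¹ ⊗ₖ (Θ + w • Δ)⁻¹) *ᵥ x) := by
      intro x w hw
      set A := (Θ + w • Δ)⁻¹ with hA
      set mw : ℝ := ⨅ i, (hinv w).eigenvalues i with hmw
      have hmwpos : (0:ℝ) < mw := lt_of_lt_of_le (inv_pos.2 hc₀) (le_ciInf (key w hw).2)
      have hApsd : A.PosSemidef := ((key w hw).1.inv).posSemidef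
      have hA1 : (A - mw • 1).PosSemidef :=
        Aux.psd_sub_smul (hinv w) fun i => ciInf_le (hbddinv w) i
      have hm1 : ((mw • 1 : Matrix (Fin p) (Fin p) ℝ)).PosSemidef := by
        rw [Matrix.smul_one_eq_diagonal]
        exact Matrix.PosSemidef.diagonal fun i => hmwpos.le
      have hidty : A ⊗ₖ A - (mw ^ 2) • (1 : Matrix (Fin p × Fin p) (Fin p × Fin p) ℝ)
          = (A - mw • 1) ⊗ₖ A + (mw • (1 : Matrix (Fin p) (Fin p) ℝ)) ⊗ₖ (A - mw • 1) := by
        simp only [Aux.sub_kron, Aux.kron_sub, Matrix.smul_kronecker, Matrix.kronecker_smul,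
          Matrix.one_kronecker_one, smul_smul, sq]
        module
      have hkron : (A ⊗ₖ A - (mw ^ 2) • 1).PosSemidef := by
        rw [hidty]
        exact (Aux.psd_kron hA1 hApsd).add (Aux.psd_kron hm1 hA1)
      have h2 := Aux.quad_of_psd hkron x
      have h3 : m₂ ≤ mw ^ 2 := ciInf_le hm₂bdd ⟨w, hw⟩
      have hxx := Aux.dot_self_nonneg x
      nlinarith [mul_le_mul_of_nonneg_right h3 hxx]
    have hdet : ∀ w ∈ Set.Icc (0:ℝ) 1, (Θ + w • Δ).det ≠ 0 :=
      fun w hw => ((key w hw).1.det_pos).ne'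
    have hScont : Continuous fun w : ℝ => Θ + w • Δ :=
      continuous_const.add (continuous_id.smul continuous_const)
    have hinvcont : ContinuousOn (fun w : ℝ => (Θ + w • Δ)⁻¹) (Set.Icc 0 1) := by
      intro w hw
      have h1 : ContinuousAt Ring.inverse (Θ + w • Δ).det :=
        NormedRing.inverse_continuousAt (Units.mk0 _ (hdet w hw))
      have h2 : ContinuousAt (Inv.inv ∘ fun w : ℝ => Θ + w • Δ) w :=
        ContinuousAt.comp (continuousAt_matrix_inv _ h1) hScont.continuousAt
      exact h2.continuousWithinAt
    have hEntry : ∀ i j : Fin p, ContinuousOn (fun w : ℝ => (Θ + w • Δ)⁻¹ i j) (Set.Icc 0 1) :=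
      fun i j => (continuous_apply_apply i j).comp_continuousOn hinvcont
    have hFcont : ∀ a b : Fin p × Fin p,
        ContinuousOn (fun w : ℝ => (1 - w) * ((Θ + w • Δ)⁻¹ ⊗ₖ (Θ + w • Δ)⁻¹) a b)
          (Set.Icc 0 1) := by
      intro a b
      simp only [Matrix.kroneckerMap_apply]
      exact (continuous_const.sub continuous_id).continuousOn.mul
        ((hEntry a.1 b.1).mul (hEntry a.2 b.2))
    have huIcc : Set.uIcc (0:ℝ) 1 = Set.Icc 0 1 := Set.uIcc_of_le zero_le_one
    have hIntg : ∀ a b : Fin p × Fin p, IntervalIntegrable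
        (fun w : ℝ => (1 - w) * ((Θ + w • Δ)⁻¹ ⊗ₖ (Θ + w • Δ)⁻¹) a b)
        MeasureTheory.volume 0 1 :=
      fun a b => (huIcc ▸ hFcont a b).intervalIntegrable
    have hquad : ∀ x : Fin p × Fin p → ℝ,
        ((1/2) * m₂) * (x ⬝ᵥ x) ≤ x ⬝ᵥ ((Matrix.of fun a b : Fin p × Fin p =>
          ∫ v in (0 : ℝ)..1, (1 - v) * ((Θ + v • Δ)⁻¹ ⊗ₖ (Θ + v • Δ)⁻¹) a b) *ᵥ x) := by
      intro x
      have hIntg2 : ∀ a b : Fin p × Fin p, IntervalIntegrable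
          (fun w : ℝ => x a * ((1 - w) * ((Θ + w • Δ)⁻¹ ⊗ₖ (Θ + w • Δ)⁻¹) a b * x b))
          MeasureTheory.volume 0 1 :=
        fun a b => ((hIntg a b).mul_const (x b)).const_mul (x a)
      have hIntg3 : IntervalIntegrable (fun w : ℝ => ∑ a : Fin p × Fin p, ∑ b : Fin p × Fin p,
          x a * ((1 - w) * ((Θ + w • Δ)⁻¹ ⊗ₖ (Θ + w • Δ)⁻¹) a b * x b))
          MeasureTheory.volume 0 1 :=
        Aux.intervalIntegrable_finsum _ _ fun a _ =>
          Aux.intervalIntegrable_finsum _ _ fun b _ => hIntg2 a b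
      have step1 : x ⬝ᵥ ((Matrix.of fun a b : Fin p × Fin p =>
            ∫ v in (0 : ℝ)..1, (1 - v) * ((Θ + v • Δ)⁻¹ ⊗ₖ (Θ + v • Δ)⁻¹) a b) *ᵥ x)
          = ∫ w in (0:ℝ)..1, ∑ a : Fin p × Fin p, ∑ b : Fin p × Fin p,
              x a * ((1 - w) * ((Θ + w • Δ)⁻¹ ⊗ₖ (Θ + w • Δ)⁻¹) a b * x b) := by
        have e1 : x ⬝ᵥ ((Matrix.of fun a b : Fin p × Fin p =>
              ∫ v in (0 : ℝ)..1, (1 - v) * ((Θ + v • Δ)⁻¹ ⊗ₖ (Θ + v • Δ)⁻¹) a b) *ᵥ x)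
            = ∑ a : Fin p × Fin p, ∑ b : Fin p × Fin p, x a *
              ((∫ v in (0 : ℝ)..1, (1 - v) * ((Θ + v • Δ)⁻¹ ⊗ₖ (Θ + v • Δ)⁻¹) a b) * x b) := by
          rw [Aux.dot_mulVec_expand]
          rfl
        rw [e1]
        have e2 : ∀ a b : Fin p × Fin p, x a *
            ((∫ v in (0 : ℝ)..1, (1 - v) * ((Θ + v • Δ)⁻¹ ⊗ₖ (Θ + v • Δ)⁻¹) a b) * x b)
            = ∫ w in (0:ℝ)..1, x a * ((1 - w) * ((Θ + w • Δ)⁻¹ ⊗ₖ (Θ + w • Δ)⁻¹) a b * x b) := by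
          intro a b
          rw [← intervalIntegral.integral_mul_const, ← intervalIntegral.integral_const_mul]
        rw [Finset.sum_congr rfl fun a _ => Finset.sum_congr rfl fun b _ => e2 a b]
        rw [Finset.sum_congr rfl fun a _ =>
          (intervalIntegral.integral_finset_sum fun b _ => hIntg2 a b).symm]
        exact (intervalIntegral.integral_finset_sum fun a _ =>
          Aux.intervalIntegrable_finsum _ _ fun b _ => hIntg2 a b).symm
      have step2 : ∀ w ∈ Set.Icc (0:ℝ) 1, (1 - w) * (m₂ * (x ⬝ᵥ x)) ≤
          ∑ a : Fin p × Fin p, ∑ b : Fin p × Fin p,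
            x a * ((1 - w) * ((Θ + w • Δ)⁻¹ ⊗ₖ (Θ + w • Δ)⁻¹) a b * x b) := by
        intro w hw
        have hsum : ∑ a : Fin p × Fin p, ∑ b : Fin p × Fin p,
            x a * ((1 - w) * ((Θ + w • Δ)⁻¹ ⊗ₖ (Θ + w • Δ)⁻¹) a b * x b)
            = (1 - w) * (x ⬝ᵥ (((Θ + w • Δ)⁻¹ ⊗ₖ (Θ + w • Δ)⁻¹) *ᵥ x)) := by
          rw [Aux.dot_mulVec_expand, Finset.mul_sum]
          refine Finset.sum_congr rfl fun a _ => ?_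
          rw [Finset.mul_sum]
          refine Finset.sum_congr rfl fun b _ => ?_
          ring
        rw [hsum]
        exact mul_le_mul_of_nonneg_left (pb x w hw) (by linarith [hw.2])
      have hconstInt : IntervalIntegrable (fun w : ℝ => (1 - w) * (m₂ * (x ⬝ᵥ x)))
          MeasureTheory.volume 0 1 :=
        ((continuous_const.sub continuous_id).mul continuous_const).intervalIntegrable 0 1
      have step3 := intervalIntegral.integral_mono_on zero_le_one hconstInt hIntg3 step2
      have step4 : ∫ w in (0:ℝ)..1, (1 - w) * (m₂ * (x ⬝ᵥ x)) = (1/2) * (m₂ * (x ⬝ᵥ x)) := by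
        rw [intervalIntegral.integral_mul_const]
        have h5 : (∫ w in (0:ℝ)..1, (1 - w)) = 1/2 := by
          have hid : IntervalIntegrable (fun w : ℝ => w) MeasureTheory.volume 0 1 :=
            Continuous.intervalIntegrable continuous_id 0 1
          rw [intervalIntegral.integral_sub intervalIntegrable_const hid,
            intervalIntegral.integral_const, integral_id]
          norm_num
        rw [h5]
      rw [step1]
      calc ((1/2) * m₂) * (x ⬝ᵥ x) = (1/2) * (m₂ * (x ⬝ᵥ x)) := by ring
        _ = ∫ w in (0:ℝ)..1, (1 - w) * (m₂ * (x ⬝ᵥ x)) := step4.symm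
        _ ≤ _ := step3
    exact le_ciInf fun i => Aux.le_eigenvalues hK (Aux.psd_of_quad hK (hquad)) i
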